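/- arXiv:2603.28143 — 2 statements merged into one kernel-verified Lean document; each statement's English description precedes it below -/
import Mathlib

section
/- Let α, β be t-bit integers with bits α_i, β_i. Define c_0 = 0 ∈ ℤ and c_{i+1} = c_i − c_i(α_{i+1} + β_{i+1}) + (2c_i − 1)·α_{i+1}·β_{i+1} + α_{i+1} for 0 ≤ i < t. Then each c_i ∈ {0,1}, and c_t = 1 if and only if α > β. -/
lemma sic_sum_bounds (a : ℕ → ℤ) (ha : ∀ i, a i = 0 ∨ a i = 1) (n : ℕ) :
    0 ≤ (∑ i ∈ Finset.range n, 2 ^ i * a i) ∧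
    (∑ i ∈ Finset.range n, 2 ^ i * a i) < 2 ^ n := by
  induction n with
  | zero => simp
  | succ n ih =>
    rw [Finset.sum_range_succ]
    rcases ha n with h | h <;> constructor <;>
    · simp [h, pow_succ]
      nlinarith [ih.1, ih.2, (by positivity : (0:ℤ) < 2 ^ n)]

/-- Optimized LSB recursion (Eq. (5)) over ℤ: with c₀ = 0 and
    c_{i+1} = c_i − c_i(α_{i+1}+β_{i+1}) + (2c_i − 1)α_{i+1}β_{i+1} + α_{i+1},
    each c_i ∈ {0,1} and c_t = 1 iff α > β. -/
theorem sic_lsb_correct (t : ℕ) (a b : ℕ → ℤ)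
    (ha : ∀ i, a i = 0 ∨ a i = 1) (hb : ∀ i, b i = 0 ∨ b i = 1)
    (c : ℕ → ℤ) (hc0 : c 0 = 0)
    (hrec : ∀ i < t, c (i + 1) =
      c i - c i * (a i + b i) + (2 * c i - 1) * (a i) * (b i) + a i) :
    (∀ i ≤ t, c i = 0 ∨ c i = 1) ∧
    (c t = 1 ↔
      (∑ i ∈ Finset.range t, 2 ^ i * a i) > (∑ i ∈ Finset.range t, 2 ^ i * b i)) := by
  have key : ∀ i ≤ t, (c i = 0 ∨ c i = 1) ∧
      (c i = 1 ↔ (∑ j ∈ Finset.range i, 2 ^ j * a j) > (∑ j ∈ Finset.range i, 2 ^ j * b j)) := by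
    intro i hi
    induction i with
    | zero => simp [hc0]
    | succ i ih =>
      obtain ⟨hci, hiff⟩ := ih (Nat.le_of_succ_le hi)
      have hr := hrec i (Nat.lt_of_succ_le hi)
      have hA := sic_sum_bounds a ha i
      have hB := sic_sum_bounds b hb i
      set A := ∑ j ∈ Finset.range i, 2 ^ j * a j with hAdef
      set B := ∑ j ∈ Finset.range i, 2 ^ j * b j with hBdef
      have hcmp : (c i = 1 ∧ B < A) ∨ (c i = 0 ∧ A ≤ B) := by
        rcases hci with h | h
        · right; refine ⟨h, ?_⟩
          by_contra hlt
          have := hiff.mpr (lt_of_not_ge hlt)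
          omega
        · left; exact ⟨h, hiff.mp h⟩
      rw [Finset.sum_range_succ, Finset.sum_range_succ, ← hAdef, ← hBdef]
      rcases ha i with h1 | h1 <;> rcases hb i with h2 | h2 <;>
        rcases hcmp with ⟨h3, h4⟩ | ⟨h3, h4⟩ <;>
        rw [h1, h2, h3] at hr <;> norm_num at hr <;>
        refine ⟨by rw [hr]; norm_num, ?_⟩ <;>
        rw [hr, h1, h2] <;> norm_num <;>
        first
          | (constructor <;> intro h <;>
              nlinarith [hA.1, hA.2, hB.1, hB.2, h4, (by positivity : (0:ℤ) < 2 ^ i)])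
          | nlinarith [hA.1, hA.2, hB.1, hB.2, h4, (by positivity : (0:ℤ) < 2 ^ i)]
  exact ⟨fun i hi => (key i hi).1, (key t le_rfl).2⟩
end

section
/- For t-bit integers α, β with bits α_i, β_i ∈ {0,1}, the MSB formula Σ_{i=1}^t [ α_i(1−β_i) · Π_{j=i+1}^t (1 − α_j − β_j + 2 α_j β_j) ] equals 1 if α > β and 0 otherwise. -/
lemma pow_sum_aux (t : ℕ) : ∑ i ∈ Finset.range t, (2:ℤ)^i = 2^t - 1 := by
  induction t with
  | zero => simp
  | succ t ih => rw [Finset.sum_range_succ, ih]; ring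

lemma bits_nonneg (t : ℕ) (a : ℕ → ℤ) (ha : ∀ i, a i = 0 ∨ a i = 1) :
    0 ≤ ∑ i ∈ Finset.range t, 2 ^ i * a i := by
  apply Finset.sum_nonneg
  intro i _
  rcases ha i with h | h <;> simp [h]

lemma bits_lt (t : ℕ) (a : ℕ → ℤ) (ha : ∀ i, a i = 0 ∨ a i = 1) :
    ∑ i ∈ Finset.range t, 2 ^ i * a i ≤ 2 ^ t - 1 := by
  calc ∑ i ∈ Finset.range t, 2 ^ i * a i ≤ ∑ i ∈ Finset.range t, (2:ℤ)^i := by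
        apply Finset.sum_le_sum
        intro i _
        rcases ha i with h | h <;> simp [h]
    _ = 2 ^ t - 1 := pow_sum_aux t

/-- MSB comparison formula:
    Σ_i α_i(1−β_i)·Π_{j>i}(1 − α_j − β_j + 2α_jβ_j) is the indicator of α > β. -/
theorem msb_comparison (t : ℕ) (a b : ℕ → ℤ)
    (ha : ∀ i, a i = 0 ∨ a i = 1) (hb : ∀ i, b i = 0 ∨ b i = 1) :
    (∑ i ∈ Finset.range t,
        a i * (1 - b i) *
          ∏ j ∈ Finset.Ico (i + 1) t, (1 - a j - b j + 2 * a j * b j)) =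
      if (∑ i ∈ Finset.range t, 2 ^ i * a i) > (∑ i ∈ Finset.range t, 2 ^ i * b i)
      then 1 else 0 := by
  induction t with
  | zero => simp
  | succ t ih =>
    have hA0 := bits_nonneg t a ha
    have hB0 := bits_nonneg t b hb
    have hA1 := bits_lt t a ha
    have hB1 := bits_lt t b hb
    rw [Finset.sum_range_succ, Finset.sum_range_succ, Finset.sum_range_succ]
    have hprod : ∀ i ∈ Finset.range t,
        a i * (1 - b i) * ∏ j ∈ Finset.Ico (i + 1) (t + 1), (1 - a j - b j + 2 * a j * b j)
        = (a i * (1 - b i) * ∏ j ∈ Finset.Ico (i + 1) t, (1 - a j - b j + 2 * a j * b j))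
            * (1 - a t - b t + 2 * a t * b t) := by
      intro i hi
      rw [Finset.prod_Ico_succ_top (by simp at hi; omega)]
      ring
    rw [Finset.sum_congr rfl hprod, ← Finset.sum_mul, ih]
    simp only [Finset.Ico_self, Finset.prod_empty, mul_one]
    rcases ha t with h1 | h1 <;> rcases hb t with h2 | h2 <;>
      simp only [h1, h2] <;> ring_nf at hA0 hB0 hA1 hB1 ⊢ <;> split_ifs with hc hd <;>
      first | rfl | (exfalso; omega) | omega
end
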